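/- Let G be a finite simple graph with vertex set {v_1,…,v_n}, and let H be the bipartite double cover of G: H has parts X = {x_1,…,x_n} and Y = {y_1,…,y_n} and edge set {x_i y_j : v_i v_j ∈ E(G)}, with strict majority thresholds on both G and H. Then an assignment f_0 : V(G) → {0,1} is a perfect target set for G under the non-progressive strict majority process if and only if the assignment g_0 on H defined by g_0(x_i) = g_0(y_i) = f_0(v_i) for every 1 ≤ i ≤ n is a perfect target set for H. -/

import Mathlib

/-! Non-progressive spread of influence under the strict majority threshold. -/

/-- The degree `d(v)` of a vertex: the number of its neighbors. -/
noncomputable def vdeg {V : Type*} (G : SimpleGraph V) (v : V) : ℕ :=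
  {u | G.Adj v u}.ncard

/-- The strict majority threshold `t(v) = ⌈(d(v)+1)/2⌉`. -/
noncomputable def vthr {V : Type*} (G : SimpleGraph V) (v : V) : ℕ :=
  (vdeg G v + 2) / 2

/-- The number of neighbors of `v` that are currently infected under `f`. -/
noncomputable def infNbrs {V : Type*} (G : SimpleGraph V) (f : V → Prop) (v : V) : ℕ :=
  {u | G.Adj v u ∧ f u}.ncard

/-- The state `f_τ` of the non-progressive strict majority process started at `f0`:
`f_τ(v) = 1` iff at least `t(v)` neighbors of `v` were infected at time `τ - 1`. -/
def stateAt {V : Type*} (G : SimpleGraph V) (f0 : V → Prop) : ℕ → V → Prop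
  | 0 => f0
  | τ + 1 => fun v => vthr G v ≤ infNbrs G (stateAt G f0 τ) v

/-- `f0` is a perfect target set: at some finite time every vertex is infected. -/
def IsPTS {V : Type*} (G : SimpleGraph V) (f0 : V → Prop) : Prop :=
  ∃ τ : ℕ, ∀ v, stateAt G f0 τ v

/-- The cost of an initial assignment: the number of initially infected vertices. -/
noncomputable def ptsCost {V : Type*} (f0 : V → Prop) : ℕ :=
  {v | f0 v}.ncard

/-- `NPPTS G`: the minimum cost of a perfect target set of `G` (non-progressive model). -/
noncomputable def NPPTS {V : Type*} (G : SimpleGraph V) : ℕ :=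
  sInf {c | ∃ f0 : V → Prop, IsPTS G f0 ∧ ptsCost f0 = c}

/-- The bipartite double cover of `G`: vertices are `(v, b)` for `v ∈ V(G)` and
`b ∈ {false, true}` (part `X` is `V × {false}`, part `Y` is `V × {true}`), and
`(v_i, false)` is adjacent to `(v_j, true)` iff `v_i v_j ∈ E(G)`. -/
def doubleCover {V : Type*} (G : SimpleGraph V) : SimpleGraph (V × Bool) where
  Adj x y := G.Adj x.1 y.1 ∧ x.2 ≠ y.2
  symm := by
    constructor
    intro x y h
    exact ⟨h.1.symm, h.2.symm⟩
  loopless := by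
    constructor
    intro x h
    exact h.2 rfl

lemma dc_set_eq {V : Type*} (G : SimpleGraph V) (P : V → Prop) (v : V) (b : Bool) :
    {p : V × Bool | (doubleCover G).Adj (v, b) p ∧ P p.1} =
      (fun u => (u, !b)) '' {u | G.Adj v u ∧ P u} := by
  ext ⟨u, c⟩
  simp only [doubleCover, Set.mem_setOf_eq, Set.mem_image, Prod.mk.injEq]
  constructor
  · rintro ⟨⟨h1, h2⟩, h3⟩
    exact ⟨u, ⟨h1, h3⟩, rfl, by simp at h2 ⊢; cases b <;> cases c <;> simp_all⟩
  · rintro ⟨u', ⟨h1, h2⟩, rfl, rfl⟩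
    exact ⟨⟨h1, by cases b <;> simp⟩, h2⟩

lemma dc_ncard {V : Type*} (G : SimpleGraph V) (P : V → Prop) (v : V) (b : Bool) :
    {p : V × Bool | (doubleCover G).Adj (v, b) p ∧ P p.1}.ncard =
      {u | G.Adj v u ∧ P u}.ncard := by
  rw [dc_set_eq]
  exact Set.ncard_image_of_injective _ (fun a a' h => by simpa using (Prod.mk.injEq ..) ▸ h |>.1)

lemma dc_vdeg {V : Type*} (G : SimpleGraph V) (v : V) (b : Bool) :
    vdeg (doubleCover G) (v, b) = vdeg G v := by
  have := dc_ncard G (fun _ => True) v b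
  simpa [vdeg] using this

lemma dc_vthr {V : Type*} (G : SimpleGraph V) (v : V) (b : Bool) :
    vthr (doubleCover G) (v, b) = vthr G v := by
  simp [vthr, dc_vdeg]

lemma dc_state {V : Type*} (G : SimpleGraph V) (f0 : V → Prop) (τ : ℕ) :
    ∀ p : V × Bool, stateAt (doubleCover G) (fun x => f0 x.1) τ p ↔ stateAt G f0 τ p.1 := by
  induction τ with
  | zero => intro p; rfl
  | succ τ ih =>
    rintro ⟨v, b⟩
    show vthr (doubleCover G) (v, b) ≤ infNbrs (doubleCover G) _ (v, b) ↔
      vthr G v ≤ infNbrs G _ v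
    rw [dc_vthr]
    have hset : {p : V × Bool | (doubleCover G).Adj (v, b) p ∧
        stateAt (doubleCover G) (fun x => f0 x.1) τ p} =
        {p : V × Bool | (doubleCover G).Adj (v, b) p ∧ stateAt G f0 τ p.1} := by
      ext p; simp [ih p]
    have : infNbrs (doubleCover G) (stateAt (doubleCover G) (fun x => f0 x.1) τ) (v, b) =
        infNbrs G (stateAt G f0 τ) v := by
      unfold infNbrs
      rw [hset]
      exact dc_ncard G _ v b
    rw [this]

/-- `f0` is a perfect target set for `G` under the non-progressive
strict majority process iff the symmetric assignment `g0(x_i) = g0(y_i) = f0(v_i)` is a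
perfect target set for the bipartite double cover of `G`. -/
theorem stmt_1 {V : Type*} [Fintype V] (G : SimpleGraph V) (f0 : V → Prop) :
    IsPTS G f0 ↔ IsPTS (doubleCover G) (fun x => f0 x.1) := by
  constructor
  · rintro ⟨τ, hτ⟩
    exact ⟨τ, fun p => (dc_state G f0 τ p).2 (hτ p.1)⟩
  · rintro ⟨τ, hτ⟩
    exact ⟨τ, fun v => (dc_state G f0 τ (v, false)).1 (hτ (v, false))⟩
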